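/- If a, b ∈ ℂ satisfy |a|² + |b|² = 1, ab ≠ 0, and |a|² ≠ |b|², then there do not exist positive semidefinite 2×2 matrices G_{UU}, G_{UD}, G_{DU}, G_{DD} such that G_{UU} + G_{UD} = |↑⟩⟨↑|, G_{DU} + G_{DD} = |↓⟩⟨↓|, G_{UU} + G_{DU} = E²_U, and G_{UD} + G_{DD} = E²_D. -/

import Mathlib

open Matrix
open scoped ComplexOrder

def e (k : Fin 2) : Fin 2 → ℂ := fun i => if i = k then 1 else 0

def phi1 (a b : ℂ) : Fin 2 → ℂ := ![a, b]

def phi2 (a b : ℂ) : Fin 2 → ℂ := ![star b, -star a]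

/-- E²_U = |a|²|φ₁⟩⟨φ₁| + |b|²|φ₂⟩⟨φ₂|. -/
noncomputable def E2U (a b : ℂ) : Matrix (Fin 2) (Fin 2) ℂ :=
  ((‖a‖ ^ 2 : ℝ) : ℂ) • vecMulVec (phi1 a b) (star (phi1 a b)) +
  ((‖b‖ ^ 2 : ℝ) : ℂ) • vecMulVec (phi2 a b) (star (phi2 a b))

/-- E²_D = |b|²|φ₁⟩⟨φ₁| + |a|²|φ₂⟩⟨φ₂|. -/
noncomputable def E2D (a b : ℂ) : Matrix (Fin 2) (Fin 2) ℂ :=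
  ((‖b‖ ^ 2 : ℝ) : ℂ) • vecMulVec (phi1 a b) (star (phi1 a b)) +
  ((‖a‖ ^ 2 : ℝ) : ℂ) • vecMulVec (phi2 a b) (star (phi2 a b))

lemma psd_entry_zero {M : Matrix (Fin 2) (Fin 2) ℂ} (hM : M.PosSemidef)
    {k : Fin 2} (hk : M k k = 0) (j : Fin 2) : M j k = 0 := by
  obtain ⟨B, rfl⟩ : ∃ B : Matrix (Fin 2) (Fin 2) ℂ, M = Bᴴ * B := by
    open scoped MatrixOrder in
    exact CStarAlgebra.nonneg_iff_eq_star_mul_self.mp hM.nonneg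
  have hcol : ∀ i, B i k = 0 := by
    have h : ∑ i, Complex.normSq (B i k) = 0 := by
      have h2 : ∑ i, (starRingEnd ℂ) (B i k) * B i k = 0 := by
        simpa [Matrix.mul_apply, Matrix.conjTranspose_apply] using hk
      have h3 : ((∑ i, Complex.normSq (B i k) : ℝ) : ℂ) = 0 := by
        push_cast
        rw [← h2]
        congr 1; ext i
        rw [Complex.normSq_eq_conj_mul_self]
      exact_mod_cast h3
    intro i
    have := (Finset.sum_eq_zero_iff_of_nonneg
      (fun i _ => Complex.normSq_nonneg _)).mp h i (Finset.mem_univ i)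
    exact Complex.normSq_eq_zero.mp this
  simp [Matrix.mul_apply, Matrix.conjTranspose_apply, hcol]

lemma psd_diag_nonneg {M : Matrix (Fin 2) (Fin 2) ℂ} (hM : M.PosSemidef)
    (k : Fin 2) : 0 ≤ M k k := by
  have := hM.dotProduct_mulVec_nonneg (Pi.single k 1)
  simpa [Matrix.mulVec_single, dotProduct, Pi.single_apply, Finset.sum_ite_eq] using this

/-- No-go: the sharp POVM {|↑⟩⟨↑|, |↓⟩⟨↓|} and the POVM {E²_U, E²_D} admit no joint POVM
when ab ≠ 0 and |a|² ≠ |b|². -/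
theorem no_joint_povm (a b : ℂ)
    (hab : ‖a‖ ^ 2 + ‖b‖ ^ 2 = 1)
    (hab0 : a * b ≠ 0)
    (hne : ‖a‖ ^ 2 ≠ ‖b‖ ^ 2) :
    ¬ ∃ (GUU GUD GDU GDD : Matrix (Fin 2) (Fin 2) ℂ),
        GUU.PosSemidef ∧ GUD.PosSemidef ∧ GDU.PosSemidef ∧ GDD.PosSemidef ∧
        GUU + GUD = vecMulVec (e 0) (star (e 0)) ∧
        GDU + GDD = vecMulVec (e 1) (star (e 1)) ∧
        GUU + GDU = E2U a b ∧
        GUD + GDD = E2D a b := by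
  rintro ⟨GUU, GUD, GDU, GDD, hUU, hUD, hDU, hDD, h1, h2, h3, h4⟩
  -- GUU 1 1 = 0
  have hsum1 : GUU 1 1 + GUD 1 1 = 0 := by
    have := congrFun (congrFun h1 1) 1
    simpa [vecMulVec_apply, e] using this
  have hUU11 : GUU 1 1 = 0 := by
    have ha := psd_diag_nonneg hUU 1
    have hb := psd_diag_nonneg hUD 1
    have : GUU 1 1 ≤ 0 := by
      calc GUU 1 1 ≤ GUU 1 1 + GUD 1 1 := le_add_of_nonneg_right hb
        _ = 0 := hsum1
    exact le_antisymm this ha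
  have hsum2 : GDU 0 0 + GDD 0 0 = 0 := by
    have := congrFun (congrFun h2 0) 0
    simpa [vecMulVec_apply, e] using this
  have hDU00 : GDU 0 0 = 0 := by
    have ha := psd_diag_nonneg hDU 0
    have hb := psd_diag_nonneg hDD 0
    have : GDU 0 0 ≤ 0 := by
      calc GDU 0 0 ≤ GDU 0 0 + GDD 0 0 := le_add_of_nonneg_right hb
        _ = 0 := hsum2
    exact le_antisymm this ha
  -- off-diagonal entries vanish
  have hUU01 : GUU 0 1 = 0 := psd_entry_zero hUU hUU11 0
  have hDU01 : GDU 0 1 = 0 := by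
    have h10 : GDU 1 0 = 0 := psd_entry_zero hDU hDU00 1
    have := hDU.1
    have := congrFun (congrFun this.symm 0) 1
    simp only [Matrix.conjTranspose_apply] at this
    rw [this, h10, star_zero]
  -- but E2U 0 1 ≠ 0
  have hE : E2U a b 0 1 = a * (starRingEnd ℂ) b *
      ((‖a‖ ^ 2 : ℝ) - (‖b‖ ^ 2 : ℝ)) := by
    rw [E2U, Matrix.add_apply, Matrix.smul_apply, Matrix.smul_apply, vecMulVec_apply, vecMulVec_apply]
    simp [E2U, vecMulVec_apply, phi1, phi2, Matrix.add_apply, Matrix.smul_apply]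
    ring
  have hcontr : E2U a b 0 1 = 0 := by
    have := congrFun (congrFun h3 0) 1
    rw [← this, Matrix.add_apply, hUU01, hDU01, add_zero]
  rw [hE] at hcontr
  have ha0 : a ≠ 0 := fun h => hab0 (by simp [h])
  have hb0 : b ≠ 0 := fun h => hab0 (by simp [h])
  have hdiff : ((‖a‖ ^ 2 : ℝ) : ℂ) - ((‖b‖ ^ 2 : ℝ) : ℂ) ≠ 0 := by
    intro h
    apply hne
    have : ((‖a‖ ^ 2 : ℝ) : ℂ) = ((‖b‖ ^ 2 : ℝ) : ℂ) := by
      linear_combination h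
    exact_mod_cast this
  rcases mul_eq_zero.mp hcontr with h | h
  · rcases mul_eq_zero.mp h with h | h
    · exact ha0 h
    · exact hb0 (by simpa using h)
  · exact hdiff (by push_cast at h ⊢; linear_combination h)
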